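/- Let d, h, c be positive integers, let U0 ∈ ℝ^{h×d} have rows u_1^0,…,u_h^0, and let α, β ∈ ℝ^h be nonnegative. For any x ∈ ℝ^d and any two pairs (V,U), (V',U') ∈ W (with columns v_j, v'_j of V, V' and rows u_j, u'_j of U, U'), the outputs of the corresponding two-layer ReLU networks satisfy ‖V[Ux]_+ − V'[U'x]_+‖₂ ≤ Σ_{j=1}^h ( (β_j ‖x‖₂ + |⟨u_j^0, x⟩|) ‖v_j − v'_j‖₂ + α_j |⟨u_j, x⟩ − ⟨u'_j, x⟩| ). -/

import Mathlib

noncomputable section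

open Finset

/-- Euclidean norm of a finite-dimensional real vector. -/
def euclNorm {n : ℕ} (x : Fin n → ℝ) : ℝ := Real.sqrt (∑ i, (x i) ^ 2)

/-- ReLU activation. -/
def relu (t : ℝ) : ℝ := max t 0

/-- Two layer ReLU network `x ↦ V [U x]₊`. -/
def netF {d h c : ℕ} (V : Matrix (Fin c) (Fin h) ℝ) (U : Matrix (Fin h) (Fin d) ℝ)
    (x : Fin d → ℝ) : Fin c → ℝ :=
  fun i => ∑ j, V i j * relu (∑ k, U j k * x k)

/-- The margin operator. -/
def marginOp {c : ℕ} (z : Fin c → ℝ) (y : Fin c) : ℝ :=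
  z y - ⨆ i : {i : Fin c // i ≠ y}, z i.val

/-- The ramp loss with margin parameter `γ`. -/
def rampLoss {c : ℕ} (γ : ℝ) (z : Fin c → ℝ) (y : Fin c) : ℝ :=
  if γ < marginOp z y then 0
  else if marginOp z y < 0 then 1
  else 1 - marginOp z y / γ

/-- Sign associated to a boolean: `±1`. -/
def sg (b : Bool) : ℝ := if b then 1 else -1


lemma euclNorm_eq {n : ℕ} (x : Fin n → ℝ) :
    euclNorm x = ‖(WithLp.equiv 2 (Fin n → ℝ)).symm x‖ := by
  rw [EuclideanSpace.norm_eq]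
  simp [euclNorm, sq_abs]

lemma euclNorm_nonneg {n : ℕ} (x : Fin n → ℝ) : 0 ≤ euclNorm x := Real.sqrt_nonneg _

lemma cs {n : ℕ} (u x : Fin n → ℝ) : |∑ k, u k * x k| ≤ euclNorm u * euclNorm x := by
  rw [euclNorm_eq, euclNorm_eq]
  have := abs_real_inner_le_norm ((WithLp.equiv 2 (Fin n → ℝ)).symm u)
    ((WithLp.equiv 2 (Fin n → ℝ)).symm x)
  simpa [PiLp.inner_apply, RCLike.inner_apply, conj_trivial, mul_comm] using this

lemma relu_lip (s t : ℝ) : |relu s - relu t| ≤ |s - t| := by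
  simpa [relu] using abs_max_sub_max_le_abs s t 0

/-- perturbation bound for two layer ReLU networks in the class `W`. -/
theorem network_perturbation_bound
    (d h c : ℕ) (hd : 0 < d) (hh : 0 < h) (hc : 0 < c)
    (U0 : Matrix (Fin h) (Fin d) ℝ) (α β : Fin h → ℝ)
    (hα : ∀ j, 0 ≤ α j) (hβ : ∀ j, 0 ≤ β j)
    (x : Fin d → ℝ)
    (V V' : Matrix (Fin c) (Fin h) ℝ) (U U' : Matrix (Fin h) (Fin d) ℝ)
    (hV : ∀ j, euclNorm (fun i => V i j) ≤ α j)
    (hU : ∀ j, euclNorm (U j - U0 j) ≤ β j)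
    (hV' : ∀ j, euclNorm (fun i => V' i j) ≤ α j)
    (hU' : ∀ j, euclNorm (U' j - U0 j) ≤ β j) :
    euclNorm (netF V U x - netF V' U' x)
      ≤ ∑ j, ((β j * euclNorm x + |∑ k, U0 j k * x k|) *
            euclNorm ((fun i => V i j) - (fun i => V' i j))
          + α j * |(∑ k, U j k * x k) - ∑ k, U' j k * x k|) := by
  classical
  set a : Fin h → ℝ := fun j => ∑ k, U j k * x k with ha
  set b : Fin h → ℝ := fun j => ∑ k, U' j k * x k with hb
  set w : Fin h → EuclideanSpace ℝ (Fin c) := fun j =>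
    (WithLp.equiv 2 (Fin c → ℝ)).symm
      (fun i => (V i j - V' i j) * relu (a j) + V' i j * (relu (a j) - relu (b j))) with hw
  have key : (WithLp.equiv 2 (Fin c → ℝ)).symm (netF V U x - netF V' U' x) = ∑ j, w j := by
    ext i
    have : (∑ j, w j) i = ∑ j, w j i := by
      rw [WithLp.ofLp_sum, Finset.sum_apply]
    rw [this]
    simp only [hw, WithLp.equiv_symm_apply, PiLp.toLp_apply, Pi.sub_apply, netF]
    rw [← Finset.sum_sub_distrib]
    exact Finset.sum_congr rfl fun j _ => by ring
  have hnorm : euclNorm (netF V U x - netF V' U' x) = ‖∑ j, w j‖ := by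
    rw [euclNorm_eq, key]
  rw [hnorm]
  refine le_trans (norm_sum_le _ _) (Finset.sum_le_sum fun j _ => ?_)
  -- decompose w j
  have hwj : w j = relu (a j) • (WithLp.equiv 2 (Fin c → ℝ)).symm (fun i => V i j - V' i j)
      + (relu (a j) - relu (b j)) • (WithLp.equiv 2 (Fin c → ℝ)).symm (fun i => V' i j) := by
    ext i
    simp only [hw, WithLp.equiv_symm_apply, PiLp.toLp_apply, PiLp.add_apply, PiLp.smul_apply,
      smul_eq_mul]
    ring
  have step1 : ‖w j‖ ≤ |relu (a j)| * euclNorm ((fun i => V i j) - (fun i => V' i j))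
      + |relu (a j) - relu (b j)| * euclNorm (fun i => V' i j) := by
    rw [hwj]
    refine le_trans (norm_add_le _ _) ?_
    rw [norm_smul, norm_smul, euclNorm_eq, euclNorm_eq]
    have : ((fun i => V i j) - (fun i => V' i j)) = fun i => V i j - V' i j := rfl
    rw [this]
    simp [Real.norm_eq_abs]
  refine le_trans step1 ?_
  have hrelu : |relu (a j)| ≤ β j * euclNorm x + |∑ k, U0 j k * x k| := by
    have h1 : |relu (a j)| ≤ |a j| := by
      rw [show relu (a j) = max (a j) 0 from rfl, abs_of_nonneg (le_max_right (a j) 0)]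
      exact max_le (le_abs_self _) (abs_nonneg _)
    refine le_trans h1 ?_
    have h2 : a j = (∑ k, (U j k - U0 j k) * x k) + ∑ k, U0 j k * x k := by
      rw [ha]
      rw [← Finset.sum_add_distrib]
      exact Finset.sum_congr rfl fun k _ => by ring
    calc |a j| ≤ |∑ k, (U j k - U0 j k) * x k| + |∑ k, U0 j k * x k| := by
          rw [h2]; exact abs_add_le _ _
      _ ≤ β j * euclNorm x + |∑ k, U0 j k * x k| := by
          refine add_le_add_left ?_ _
          refine le_trans (cs _ _) ?_
          exact mul_le_mul_of_nonneg_right (hU j) (euclNorm_nonneg x)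
  have hlip : |relu (a j) - relu (b j)| * euclNorm (fun i => V' i j)
      ≤ α j * |a j - b j| := by
    have := mul_le_mul (relu_lip (a j) (b j)) (hV' j) (euclNorm_nonneg _) (abs_nonneg _)
    linarith [this, mul_comm (|a j - b j|) (α j)]
  refine add_le_add ?_ ?_
  · exact mul_le_mul_of_nonneg_right hrelu (euclNorm_nonneg _)
  · simpa [ha, hb] using hlip

end
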